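/- arXiv:2312.04516 — 4 statements merged into one kernel-verified Lean document; each statement's English description precedes it below -/
import Mathlib

section
/- Let α and β be nonempty types and let u : α → β → ℝ be a bounded function. Fix a baseline first-stage action a₀ : α and a baseline continuation policy τ : α → β. Then (⨆ a, ⨆ b, u a b) − u a₀ (τ a₀) ≤ ((⨆ a, u a (τ a)) − u a₀ (τ a₀)) + ⨆ a, ((⨆ b, u a b) − u a (τ a)). In words: the total best-response utility loss is at most the immediate utility loss (optimizing only the first-stage action while keeping the continuation policy τ fixed) plus the worst-case, over first-stage actions, of the best-response loss in the ensuing subgame. -/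
/-- Two-stage core of the Decomposition Lemma: the total best-response utility
loss is at most the immediate utility loss plus the worst-case downstream
best-response loss. -/
theorem decomposition_two_stage {α β : Type*} [Nonempty α] [Nonempty β]
    (u : α → β → ℝ) (hbdd : ∃ C : ℝ, ∀ a b, |u a b| ≤ C)
    (a₀ : α) (τ : α → β) :
    (⨆ a, ⨆ b, u a b) - u a₀ (τ a₀) ≤
      ((⨆ a, u a (τ a)) - u a₀ (τ a₀)) + ⨆ a, ((⨆ b, u a b) - u a (τ a)) := by
  obtain ⟨C, hC⟩ := hbdd
  have hbB : ∀ a, BddAbove (Set.range (u a)) := fun a =>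
    ⟨C, fun x ⟨b, hb⟩ => hb ▸ (abs_le.mp (hC a b)).2⟩
  have hb1 : BddAbove (Set.range fun a => u a (τ a)) :=
    ⟨C, fun x ⟨a, ha⟩ => ha ▸ (abs_le.mp (hC a (τ a))).2⟩
  have hb2 : BddAbove (Set.range fun a => (⨆ b, u a b) - u a (τ a)) := by
    refine ⟨2 * C, fun x ⟨a, ha⟩ => ?_⟩
    subst ha
    dsimp only
    have h1 : (⨆ b, u a b) ≤ C := ciSup_le fun b => (abs_le.mp (hC a b)).2
    have h2 : -C ≤ u a (τ a) := (abs_le.mp (hC a (τ a))).1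
    linarith
  have key : (⨆ a, ⨆ b, u a b) ≤
      (⨆ a, u a (τ a)) + ⨆ a, ((⨆ b, u a b) - u a (τ a)) := by
    refine ciSup_le fun a => ?_
    have : (⨆ b, u a b) = u a (τ a) + ((⨆ b, u a b) - u a (τ a)) := by ring
    rw [this]
    exact add_le_add (le_ciSup hb1 a) (le_ciSup hb2 a)
  linarith
end

section
/- Let n ∈ ℕ, let α : Fin n → Type be a family of nonempty action types, and let u : (∀ i, α i) → ℝ be bounded. Fix a baseline strategy σ : ∀ i, α i. For each round t : Fin n define the worst-case immediate loss L t = ⨆ over x : (∀ i, α i) of ((⨆ over a : α t of u applied to the play that equals x on coordinates i < t, equals a at coordinate t, and equals σ on coordinates i > t) − u applied to the play that equals x on coordinates i < t and equals σ on coordinates i ≥ t). Then (⨆ over x of u x) − u σ ≤ ∑ over t : Fin n of L t. -/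
/-- Deterministic core of the ε-bound corollary: the total best-response loss of
the baseline strategy profile σ is bounded by the sum over rounds of the
worst-case immediate utility loss. -/
theorem total_loss_le_sum_immediate_losses (n : ℕ) (α : Fin n → Type*)
    [∀ i, Nonempty (α i)] (u : (∀ i, α i) → ℝ)
    (hbdd : ∃ C : ℝ, ∀ x, |u x| ≤ C) (σ : ∀ i, α i) :
    (⨆ x, u x) - u σ ≤
      ∑ t : Fin n, ⨆ x : ∀ i, α i,
        ((⨆ a : α t,
            u (fun i => if h : i < t then x i else if h' : i = t then h'.symm ▸ a else σ i))
          - u (fun i => if i < t then x i else σ i)) := by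
  classical
  obtain ⟨C, hC⟩ := hbdd
  have hub : ∀ x, u x ≤ C := fun x => (abs_le.1 (hC x)).2
  have hlb : ∀ x, -C ≤ u x := fun x => (abs_le.1 (hC x)).1
  set L : Fin n → ℝ := fun t => ⨆ x : ∀ i, α i,
        ((⨆ a : α t,
            u (fun i => if h : i < t then x i else if h' : i = t then h'.symm ▸ a else σ i))
          - u (fun i => if i < t then x i else σ i)) with hL
  set f : ℕ → ℝ := fun k => ⨆ x : ∀ i, α i, u (fun i : Fin n => if (i : ℕ) < k then x i else σ i)
    with hf
  have hbdf : ∀ k, BddAbove (Set.range fun x : ∀ i, α i =>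
      u (fun i : Fin n => if (i : ℕ) < k then x i else σ i)) :=
    fun k => ⟨C, by rintro _ ⟨x, rfl⟩; exact hub _⟩
  have hf0 : f 0 = u σ := by
    simp [hf]
  have hfn : f n = ⨆ x, u x := by
    have h : ∀ x : ∀ i, α i, (fun i : Fin n => if (i : ℕ) < n then x i else σ i) = x := by
      intro x; funext i; simp [i.isLt]
    simp only [hf, h]
  -- single step bound
  have step : ∀ t : Fin n, f ((t : ℕ) + 1) ≤ L t + f t := by
    intro t
    apply ciSup_le
    intro x
    -- the sup-over-a family is bounded
    have hbdA : BddAbove (Set.range fun a : α t =>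
        u (fun i => if h : i < t then x i else if h' : i = t then h'.symm ▸ a else σ i)) :=
      ⟨C, by rintro _ ⟨a, rfl⟩; exact hub _⟩
    have hbdL : BddAbove (Set.range fun x : ∀ i, α i =>
        ((⨆ a : α t,
            u (fun i => if h : i < t then x i else if h' : i = t then h'.symm ▸ a else σ i))
          - u (fun i => if i < t then x i else σ i))) := by
      refine ⟨C + C, ?_⟩
      rintro _ ⟨y, rfl⟩
      have h1 : (⨆ a : α t,
          u (fun i => if h : i < t then y i else if h' : i = t then h'.symm ▸ a else σ i)) ≤ C :=
        ciSup_le fun a => hub _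
      have h2 : -(u (fun i => if i < t then y i else σ i)) ≤ C := by
        have := hlb (fun i => if i < t then y i else σ i); linarith
      simpa [sub_eq_add_neg] using add_le_add h1 h2
    -- identify the play with the hybrid at a = x t
    have hplay : (fun i : Fin n => if (i : ℕ) < (t : ℕ) + 1 then x i else σ i) =
        (fun i => if h : i < t then x i else if h' : i = t then h'.symm ▸ (x t) else σ i) := by
      funext i
      by_cases h1 : i < t
      · have : (i : ℕ) < (t : ℕ) + 1 := Nat.lt_succ_of_lt h1
        simp [this, h1]
      · by_cases h2 : i = t
        · subst h2
          simp
        · have h3 : ¬ (i : ℕ) < (t : ℕ) + 1 := by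
            intro hc
            rcases Nat.lt_succ_iff_lt_or_eq.1 hc with hc' | hc'
            · exact h1 hc'
            · exact h2 (Fin.ext hc')
          simp [h1, h2, h3]
    have h1 : u (fun i : Fin n => if (i : ℕ) < (t : ℕ) + 1 then x i else σ i) ≤
        ⨆ a : α t,
          u (fun i => if h : i < t then x i else if h' : i = t then h'.symm ▸ a else σ i) := by
      rw [hplay]
      exact le_ciSup hbdA (x t)
    have h2 : (⨆ a : α t,
          u (fun i => if h : i < t then x i else if h' : i = t then h'.symm ▸ a else σ i))
        - u (fun i => if i < t then x i else σ i) ≤ L t := le_ciSup hbdL x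
    have h3 : u (fun i => if i < t then x i else σ i) ≤ f t := by
      have he : (fun i => if i < t then x i else σ i) =
          (fun i : Fin n => if (i : ℕ) < (t : ℕ) then x i else σ i) := by
        rfl
      rw [he]
      exact le_ciSup (hbdf (t : ℕ)) x
    linarith
  -- telescoping
  set L' : ℕ → ℝ := fun j => if h : j < n then L ⟨j, h⟩ else 0 with hL'
  have tele : ∀ k, k ≤ n → f k ≤ f 0 + ∑ j ∈ Finset.range k, L' j := by
    intro k
    induction k with
    | zero => intro _; simp
    | succ m ih =>
      intro hm
      have hmn : m < n := hm
      have := step ⟨m, hmn⟩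
      have ihm := ih (le_of_lt hmn)
      rw [Finset.sum_range_succ]
      have hLm : L' m = L ⟨m, hmn⟩ := by simp [hL', hmn]
      simp only [hLm]
      calc f (m + 1) ≤ L ⟨m, hmn⟩ + f m := this
        _ ≤ L ⟨m, hmn⟩ + (f 0 + ∑ j ∈ Finset.range m, L' j) := by linarith
        _ = f 0 + (∑ j ∈ Finset.range m, L' j + L ⟨m, hmn⟩) := by ring
  have hfinal := tele n le_rfl
  rw [hf0, hfn] at hfinal
  have hsum : ∑ j ∈ Finset.range n, L' j = ∑ t : Fin n, L t := by
    rw [Finset.sum_range]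
    apply Finset.sum_congr rfl
    intro t _
    simp [hL']
  rw [hsum] at hfinal
  rw [hL] at hfinal
  linarith
end

section
/- Let d ∈ ℕ, let y, z : Fin d → ℝ with y ≤ z (componentwise), let f : (Fin d → ℝ) → ℝ be convex on the hyperrectangle Set.Icc y z, and let g : (Fin d → ℝ) → ℝ be affine, i.e., g = l + c for some linear map l : (Fin d → ℝ) →ₗ[ℝ] ℝ and constant c ∈ ℝ. Then for every x ∈ Set.Icc y z there exists a vertex w of the hyperrectangle (a point with w k = y k or w k = z k for every k) such that f x − g x ≤ f w − g w; hence the supremum of the loss f − g over the hyperrectangle is bounded by its maximum over the finitely many vertices. -/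
/-- The loss `f - g` between a convex function `f` and an affine function `g`
on a hyperrectangle is dominated, at each point, by its value at some vertex. -/
theorem convex_sub_affine_le_vertex (d : ℕ) (y z : Fin d → ℝ) (hyz : y ≤ z)
    (f : (Fin d → ℝ) → ℝ) (hf : ConvexOn ℝ (Set.Icc y z) f)
    (g : (Fin d → ℝ) → ℝ) (l : (Fin d → ℝ) →ₗ[ℝ] ℝ) (c : ℝ)
    (hg : ∀ x, g x = l x + c) :
    ∀ x ∈ Set.Icc y z, ∃ w : Fin d → ℝ,
      (∀ k, w k = y k ∨ w k = z k) ∧ f x - g x ≤ f w - g w := by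
  have hgc : ConcaveOn ℝ (Set.Icc y z) g := by
    refine ⟨convex_Icc y z, ?_⟩
    intro u hu v hv a b ha hb hab
    have he : g (a • u + b • v) = a * g u + b * g v := by
      simp only [hg, map_add, map_smul, smul_eq_mul]
      linear_combination (-c) * hab
    rw [smul_eq_mul, smul_eq_mul, he]
  have hh : ConvexOn ℝ (Set.Icc y z) (fun p => f p - g p) := hf.sub hgc
  intro x hx
  suffices H : ∀ s : Finset (Fin d), ∃ w ∈ Set.Icc y z,
      (∀ k ∈ s, w k = y k ∨ w k = z k) ∧ f x - g x ≤ f w - g w by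
    obtain ⟨w, hw, h1, h2⟩ := H Finset.univ
    exact ⟨w, fun k => h1 k (Finset.mem_univ k), h2⟩
  intro s
  induction s using Finset.induction_on with
  | empty => exact ⟨x, hx, by simp, le_refl _⟩
  | @insert k s hk ih =>
    obtain ⟨w, hw, h1, h2⟩ := ih
    set w₁ := Function.update w k (y k) with hw₁def
    set w₂ := Function.update w k (z k) with hw₂def
    have hw1 : w₁ ∈ Set.Icc y z := by
      constructor <;> intro j <;> by_cases hj : j = k <;>
        simp [hw₁def, Function.update, hj, hyz k, (hw.1 j), (hw.2 j)]
    have hw2 : w₂ ∈ Set.Icc y z := by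
      constructor <;> intro j <;> by_cases hj : j = k <;>
        simp [hw₂def, Function.update, hj, hyz k, (hw.1 j), (hw.2 j)]
    have hmem : w k ∈ segment ℝ (y k) (z k) := by
      rw [segment_eq_Icc (hyz k)]
      exact ⟨hw.1 k, hw.2 k⟩
    obtain ⟨a, b, ha, hb, hab, hsum⟩ := hmem
    have hseg : w ∈ segment ℝ w₁ w₂ := by
      refine ⟨a, b, ha, hb, hab, ?_⟩
      funext j
      by_cases hj : j = k
      · subst hj
        simpa [hw₁def, hw₂def] using hsum
      · simp only [hw₁def, hw₂def, Pi.add_apply, Pi.smul_apply,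
          Function.update_of_ne hj, smul_eq_mul]
        linear_combination w j * hab
    have hle := hh.le_on_segment hw1 hw2 hseg
    rcases le_total (f w₁ - g w₁) (f w₂ - g w₂) with hcmp | hcmp
    · refine ⟨w₂, hw2, ?_, ?_⟩
      · intro j hj
        by_cases hjk : j = k
        · subst hjk; right; simp [hw₂def]
        · rw [hw₂def, Function.update_of_ne hjk]
          exact h1 j ((Finset.mem_insert.mp hj).resolve_left hjk)
      · calc f x - g x ≤ f w - g w := h2
          _ ≤ max (f w₁ - g w₁) (f w₂ - g w₂) := hle
          _ = f w₂ - g w₂ := max_eq_right hcmp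
    · refine ⟨w₁, hw1, ?_, ?_⟩
      · intro j hj
        by_cases hjk : j = k
        · subst hjk; left; simp [hw₁def]
        · rw [hw₁def, Function.update_of_ne hjk]
          exact h1 j ((Finset.mem_insert.mp hj).resolve_left hjk)
      · calc f x - g x ≤ f w - g w := h2
          _ ≤ max (f w₁ - g w₁) (f w₂ - g w₂) := hle
          _ = f w₁ - g w₁ := max_eq_left hcmp
end

section
/- Let Ω be a nonempty finite type, p : Ω → ℝ with p ω ≥ 0 for all ω and ∑_ω p ω = 1, let α and β be nonempty types, and let u : α → Ω → β → ℝ be bounded. For a current-round action a : α and a continuation policy τ : Ω → β, write V a τ = ∑_ω p ω · u a ω (τ ω). Fix a baseline action a₀ : α and a baseline continuation σ : α → Ω → β. Then (⨆ a, ⨆ τ : Ω → β, V a τ) − V a₀ (σ a₀) ≤ ((⨆ a, V a (σ a)) − V a₀ (σ a₀)) + ⨆ a, ⨆ ω, ((⨆ b, u a ω b) − u a ω (σ a ω)). -/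
/-- Bayesian (finite-state) form of the Decomposition Lemma: the best-response
expected-utility loss is at most the immediate loss plus the supremum over
successor states of the downstream best-response loss. -/
theorem bayesian_decomposition {Ω : Type*} [Fintype Ω] [Nonempty Ω]
    (p : Ω → ℝ) (hp0 : ∀ ω, 0 ≤ p ω) (hp1 : ∑ ω, p ω = 1)
    {α β : Type*} [Nonempty α] [Nonempty β]
    (u : α → Ω → β → ℝ) (hbdd : ∃ C : ℝ, ∀ a ω b, |u a ω b| ≤ C)
    (a₀ : α) (σ : α → Ω → β) :
    (⨆ a, ⨆ τ : Ω → β, ∑ ω, p ω * u a ω (τ ω))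
        - ∑ ω, p ω * u a₀ ω (σ a₀ ω) ≤
      ((⨆ a, ∑ ω, p ω * u a ω (σ a ω)) - ∑ ω, p ω * u a₀ ω (σ a₀ ω))
        + ⨆ a, ⨆ ω, ((⨆ b, u a ω b) - u a ω (σ a ω)) := by
  obtain ⟨C, hC⟩ := hbdd
  -- basic bounds
  have hub : ∀ a ω b, u a ω b ≤ C := fun a ω b => (abs_le.mp (hC a ω b)).2
  have hlb : ∀ a ω b, -C ≤ u a ω b := fun a ω b => (abs_le.mp (hC a ω b)).1
  have hbB : ∀ a ω, BddAbove (Set.range (u a ω)) :=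
    fun a ω => ⟨C, Set.forall_mem_range.mpr (hub a ω)⟩
  have hsupb_le : ∀ a ω, (⨆ b, u a ω b) ≤ C := fun a ω => ciSup_le (hub a ω)
  -- D bounds
  have hDterm : ∀ a ω, (⨆ b, u a ω b) - u a ω (σ a ω) ≤ C + C := fun a ω => by
    have := hlb a ω (σ a ω)
    have := hsupb_le a ω
    linarith
  have hbω : ∀ a, BddAbove (Set.range fun ω => (⨆ b, u a ω b) - u a ω (σ a ω)) :=
    fun a => ⟨C + C, Set.forall_mem_range.mpr (hDterm a)⟩
  have hba : BddAbove (Set.range fun a => ⨆ ω, ((⨆ b, u a ω b) - u a ω (σ a ω))) :=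
    ⟨C + C, Set.forall_mem_range.mpr fun a => ciSup_le (hDterm a)⟩
  set D := ⨆ a, ⨆ ω, ((⨆ b, u a ω b) - u a ω (σ a ω)) with hD
  have hDge : ∀ a ω, (⨆ b, u a ω b) - u a ω (σ a ω) ≤ D := fun a ω =>
    le_trans (le_ciSup (hbω a) ω) (le_ciSup hba a)
  -- sup over a of V a (σ a)
  have hVle : ∀ a (τ : Ω → β), (∑ ω, p ω * u a ω (τ ω)) ≤ C := fun a τ => by
    calc ∑ ω, p ω * u a ω (τ ω) ≤ ∑ ω, p ω * C :=
          Finset.sum_le_sum fun ω _ => mul_le_mul_of_nonneg_left (hub a ω (τ ω)) (hp0 ω)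
      _ = C := by rw [← Finset.sum_mul, hp1, one_mul]
  have hbS : BddAbove (Set.range fun a => ∑ ω, p ω * u a ω (σ a ω)) :=
    ⟨C, Set.forall_mem_range.mpr fun a => hVle a (σ a)⟩
  set S := ⨆ a, ∑ ω, p ω * u a ω (σ a ω) with hS
  -- key pointwise bound
  have key : ∀ a (τ : Ω → β), (∑ ω, p ω * u a ω (τ ω)) ≤ S + D := by
    intro a τ
    have h1 : (∑ ω, p ω * u a ω (τ ω)) ≤ (∑ ω, p ω * u a ω (σ a ω)) + D := by
      have : ∑ ω, p ω * u a ω (τ ω) ≤ ∑ ω, (p ω * u a ω (σ a ω) + p ω * D) := by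
        refine Finset.sum_le_sum fun ω _ => ?_
        have h2 : u a ω (τ ω) ≤ (⨆ b, u a ω b) := le_ciSup (hbB a ω) (τ ω)
        have h3 : u a ω (τ ω) ≤ u a ω (σ a ω) + D := by
          have := hDge a ω; linarith
        nlinarith [hp0 ω, mul_le_mul_of_nonneg_left h3 (hp0 ω)]
      calc ∑ ω, p ω * u a ω (τ ω) ≤ ∑ ω, (p ω * u a ω (σ a ω) + p ω * D) := this
        _ = (∑ ω, p ω * u a ω (σ a ω)) + (∑ ω, p ω) * D := by
            rw [Finset.sum_add_distrib, Finset.sum_mul]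
        _ = (∑ ω, p ω * u a ω (σ a ω)) + D := by rw [hp1, one_mul]
    have h4 : (∑ ω, p ω * u a ω (σ a ω)) ≤ S := le_ciSup hbS a
    linarith
  have hsup : (⨆ a, ⨆ τ : Ω → β, ∑ ω, p ω * u a ω (τ ω)) ≤ S + D :=
    ciSup_le fun a => ciSup_le fun τ => key a τ
  linarith
end
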